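/- For a step-up test with critical values (α_i) such that i ↦ α_i/i is non-increasing, under the basic independence model with uniform true p-values, the FDR is non-decreasing as a function of each false-null p-value p_j, j ∈ I_1. -/

import Mathlib

open MeasureTheory ProbabilityTheory Finset
open scoped Classical
noncomputable section

/-- `#{i : p i ≤ t}`, i.e. `m·F̂_m(t)`. -/
def countLE {m : ℕ} (p : Fin m → ℝ) (t : ℝ) : ℕ :=
  (Finset.univ.filter (fun i => p i ≤ t)).card

/-- The `i`-th order statistic `p_{i:m}` (for `1 ≤ i ≤ m`), characterized by
`p_{i:m} ≤ t ↔ i ≤ #{k : p k ≤ t}`. -/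
def orderStat {m : ℕ} (p : Fin m → ℝ) (i : ℕ) : ℝ :=
  sInf {t | i ≤ countLE p t}

/-- Step-up rejection number `R = max {j : p_{j:m} ≤ α_j}` (`max ∅ = 0`). -/
def suR {m : ℕ} (α : ℕ → ℝ) (p : Fin m → ℝ) : ℕ :=
  WithBot.unbotD 0 (((Finset.range (m+1)).filter (fun j => 1 ≤ j ∧ orderStat p j ≤ α j)).max)

/-- Step-down rejection number `R = max {j : p_{i:m} ≤ α_i for all i ≤ j}`. -/
def sdR {m : ℕ} (α : ℕ → ℝ) (p : Fin m → ℝ) : ℕ :=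
  WithBot.unbotD 0 (((Finset.range (m+1)).filter
    (fun j => ∀ i ∈ Finset.Icc 1 j, orderStat p i ≤ α i)).max)

/-- FDR `= E[V / max(R,1)]` for rejection number `R` and rejection rule `rej`. -/
def FDR {Ω : Type*} [MeasurableSpace Ω] (μ : Measure Ω) {m : ℕ}
    (p : Ω → Fin m → ℝ) (I0 : Finset (Fin m))
    (R : (Fin m → ℝ) → ℕ) (rej : (Fin m → ℝ) → Fin m → Prop) : ℝ :=
  ∫ ω, ((I0.filter (fun i => rej (p ω) i)).card : ℝ) / (max (R (p ω)) 1 : ℕ) ∂μ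

/-- FDR of the step-up test with critical values `α`. -/
def suFDR {Ω : Type*} [MeasurableSpace Ω] (μ : Measure Ω) {m : ℕ}
    (α : ℕ → ℝ) (p : Ω → Fin m → ℝ) (I0 : Finset (Fin m)) : ℝ :=
  FDR μ p I0 (suR α) (fun q i => q i ≤ α (suR α q))

/-- FDR of the step-down test with critical values `α`
(rejecting the hypotheses belonging to `p_{i:m}`, `i ≤ R`). -/
def sdFDR {Ω : Type*} [MeasurableSpace Ω] (μ : Measure Ω) {m : ℕ}
    (α : ℕ → ℝ) (p : Ω → Fin m → ℝ) (I0 : Finset (Fin m)) : ℝ :=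
  FDR μ p I0 (sdR α) (fun q i => 1 ≤ sdR α q ∧ q i ≤ orderStat q (sdR α q))

/-- Benjamini–Hochberg critical values `b_j = jα/m`. -/
def bh (m : ℕ) (α : ℝ) (j : ℕ) : ℝ := j * α / m

/-- The uniform distribution on `[0,1]`. -/
def unif01 : Measure ℝ := volume.restrict (Set.Icc 0 1)

namespace SuAux

variable {m : ℕ}

lemma countLE_mono (p : Fin m → ℝ) {t s : ℝ} (h : t ≤ s) : countLE p t ≤ countLE p s :=
  Finset.card_le_card (Finset.monotone_filter_right _ (fun k _ hk => le_trans hk h))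

lemma countLE_anti {p q : Fin m → ℝ} (h : ∀ k, p k ≤ q k) (t : ℝ) :
    countLE q t ≤ countLE p t :=
  Finset.card_le_card (Finset.monotone_filter_right _ (fun k _ hk => le_trans (h k) hk))

lemma orderStat_le_iff {p : Fin m → ℝ} {i : ℕ} (h1 : 1 ≤ i) (h2 : i ≤ m) (t : ℝ) :
    orderStat p i ≤ t ↔ i ≤ countLE p t := by
  have hm : 0 < m := lt_of_lt_of_le h1 h2
  have huniv : (Finset.univ : Finset (Fin m)).Nonempty := ⟨⟨0, hm⟩, Finset.mem_univ _⟩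
  set S : Set ℝ := {t | i ≤ countLE p t} with hS
  have hne : S.Nonempty := by
    refine ⟨(Finset.univ.image p).max' (huniv.image p), ?_⟩
    have hall : ∀ k, p k ≤ (Finset.univ.image p).max' (huniv.image p) :=
      fun k => Finset.le_max' _ _ (Finset.mem_image_of_mem p (Finset.mem_univ k))
    have : Finset.univ.filter (fun k => p k ≤ (Finset.univ.image p).max' (huniv.image p))
        = Finset.univ := Finset.filter_true_of_mem (fun k _ => hall k)
    simp only [hS, Set.mem_setOf_eq, countLE, this, Finset.card_univ, Fintype.card_fin]
    exact h2
  have hbdd : BddBelow S := by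
    refine ⟨(Finset.univ.image p).min' (huniv.image p), fun t ht => ?_⟩
    by_contra hlt
    push_neg at hlt
    have hzero : countLE p t = 0 := by
      rw [countLE, Finset.card_eq_zero, Finset.filter_eq_empty_iff]
      intro k _
      have : (Finset.univ.image p).min' (huniv.image p) ≤ p k :=
        Finset.min'_le _ _ (Finset.mem_image_of_mem p (Finset.mem_univ k))
      intro hk
      exact absurd (le_trans this hk) (not_le.mpr hlt)
    have : i ≤ 0 := hzero ▸ ht
    omega
  have hcs : sInf S ∈ S := by
    by_contra hc
    have hclt : countLE p (sInf S) < i := by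
      simpa [hS, Set.mem_setOf_eq, not_le] using hc
    have hTne : (Finset.univ.filter (fun k => sInf S < p k)).Nonempty := by
      by_contra hT
      rw [Finset.not_nonempty_iff_eq_empty, Finset.filter_eq_empty_iff] at hT
      have : Finset.univ.filter (fun k => p k ≤ (sInf S)) = Finset.univ :=
        Finset.filter_true_of_mem (fun k _ => le_of_not_gt (hT (Finset.mem_univ k)))
      have : countLE p (sInf S) = m := by
        rw [countLE, this, Finset.card_univ, Fintype.card_fin]
      omega
    set δ := ((Finset.univ.filter (fun k => sInf S < p k)).image p).min'
      (hTne.image p) with hδ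
    have hδgt : sInf S < δ := by
      obtain ⟨k, hk, hpk⟩ := Finset.mem_image.mp (((Finset.univ.filter
        (fun k => sInf S < p k)).image p).min'_mem (hTne.image p))
      rw [hδ, ← hpk]
      · exact (Finset.mem_filter.mp hk).2
    obtain ⟨t, htS, htδ⟩ := (csInf_lt_iff hbdd hne).mp hδgt
    have hct : sInf S ≤ t := csInf_le hbdd htS
    have hsub : countLE p t ≤ countLE p (sInf S) := by
      apply Finset.card_le_card
      apply Finset.monotone_filter_right
      intro k _ hk
      by_contra hk2
      push_neg at hk2
      have : δ ≤ p k := Finset.min'_le _ _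
        (Finset.mem_image_of_mem p (Finset.mem_filter.mpr ⟨Finset.mem_univ k, hk2⟩))
      linarith
    have : i ≤ countLE p t := htS
    omega
  constructor
  · intro h
    exact le_trans hcs (countLE_mono p h)
  · intro h
    exact csInf_le hbdd h

lemma suR_le (α : ℕ → ℝ) (p : Fin m → ℝ) : suR α p ≤ m := by
  unfold suR
  cases hmax : ((Finset.range (m+1)).filter (fun j => 1 ≤ j ∧ orderStat p j ≤ α j)).max with
  | bot => simp
  | coe b =>
    have hb := Finset.mem_of_max hmax
    have := Finset.mem_range.mp (Finset.mem_filter.mp hb).1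
    rw [WithBot.unbotD_coe]
    omega
  
lemma le_suR (α : ℕ → ℝ) (p : Fin m → ℝ) {j : ℕ} (h1 : 1 ≤ j) (h2 : j ≤ m)
    (h3 : j ≤ countLE p (α j)) : j ≤ suR α p := by
  have hj : j ∈ (Finset.range (m+1)).filter (fun j => 1 ≤ j ∧ orderStat p j ≤ α j) :=
    Finset.mem_filter.mpr ⟨Finset.mem_range.mpr (by omega), h1,
      (orderStat_le_iff h1 h2 _).mpr h3⟩
  have hle := Finset.le_max hj
  unfold suR
  cases hmax : ((Finset.range (m+1)).filter (fun j => 1 ≤ j ∧ orderStat p j ≤ α j)).max with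
  | bot => rw [hmax] at hle; exact absurd hle (by simp)
  | coe b =>
    rw [hmax] at hle
    simpa using WithBot.coe_le_coe.mp hle

lemma suR_mem (α : ℕ → ℝ) (p : Fin m → ℝ) (h : suR α p ≠ 0) :
    suR α p ∈ (Finset.range (m+1)).filter (fun j => 1 ≤ j ∧ orderStat p j ≤ α j) := by
  unfold suR at h ⊢
  cases hmax : ((Finset.range (m+1)).filter (fun j => 1 ≤ j ∧ orderStat p j ≤ α j)).max with
  | bot => rw [hmax] at h; simp at h
  | coe b =>
    simpa using Finset.mem_of_max hmax

lemma suR_spec (α : ℕ → ℝ) (p : Fin m → ℝ) (h : 1 ≤ suR α p) :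
    suR α p ≤ countLE p (α (suR α p)) := by
  have hmem := suR_mem α p (by omega)
  obtain ⟨hr, h1, hOS⟩ := Finset.mem_filter.mp hmem
  exact (orderStat_le_iff h1 (by have := Finset.mem_range.mp hr; omega) _).mp hOS

lemma suR_anti (α : ℕ → ℝ) {p q : Fin m → ℝ} (h : ∀ k, p k ≤ q k) :
    suR α q ≤ suR α p := by
  rcases Nat.eq_zero_or_pos (suR α q) with h0 | h0
  · omega
  · have hmem := suR_mem α q (by omega)
    obtain ⟨hr, h1, _⟩ := Finset.mem_filter.mp hmem
    have hm := Finset.mem_range.mp hr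
    have hc : suR α q ≤ countLE q (α (suR α q)) := suR_spec α q h0
    exact le_suR α p h1 (by omega) (le_trans hc (countLE_anti h _))

lemma one_le_suR_update (hm : 1 ≤ m) {α : ℕ → ℝ} (hα1 : 0 < α 1)
    (x : Fin m → ℝ) (i : Fin m) : 1 ≤ suR α (Function.update x i 0) := by
  apply le_suR α _ le_rfl hm
  rw [countLE]
  refine Finset.card_pos.mpr ⟨i, Finset.mem_filter.mpr ⟨Finset.mem_univ _, ?_⟩⟩
  rw [Function.update_self]
  exact le_of_lt hα1

lemma update_le {x : Fin m → ℝ} {i : Fin m} (hx : 0 ≤ x i) :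
    ∀ k, Function.update x i 0 k ≤ x k := by
  intro k
  rcases eq_or_ne k i with rfl | hk
  · rw [Function.update_self]; exact hx
  · simp [Function.update_of_ne hk]

lemma suR_update_eq {α : ℕ → ℝ} {x : Fin m → ℝ} {i : Fin m} (hx : 0 ≤ x i)
    (h : x i ≤ α (suR α (Function.update x i 0))) :
    suR α x = suR α (Function.update x i 0) := by
  have hle : suR α x ≤ suR α (Function.update x i 0) := suR_anti α (update_le hx)
  rcases Nat.eq_zero_or_pos (suR α (Function.update x i 0)) with h0 | h0
  · omega
  · refine le_antisymm hle ?_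
    set r := suR α (Function.update x i 0) with hr
    have hspec : r ≤ countLE (Function.update x i 0) (α r) :=
      suR_spec α (Function.update x i 0) h0
    have hrm : r ≤ m := suR_le α (Function.update x i 0)
    have hsub : countLE (Function.update x i 0) (α r) ≤ countLE x (α r) := by
      apply Finset.card_le_card
      apply Finset.monotone_filter_right
      intro k _ hk
      rcases eq_or_ne k i with rfl | hne
      · exact h
      · rwa [Function.update_of_ne hne] at hk
    exact le_suR α x h0 hrm (le_trans hspec hsub)

lemma update_indicator_iff {α : ℕ → ℝ} (hmono : Monotone α) {x : Fin m → ℝ} {i : Fin m}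
    (hx : 0 ≤ x i) :
    (x i ≤ α (suR α x)) ↔ (x i ≤ α (suR α (Function.update x i 0))) := by
  constructor
  · intro h
    exact le_trans h (hmono (suR_anti α (update_le hx)))
  · intro h
    rw [suR_update_eq hx h]
    exact h

lemma measurable_countLE (t : ℝ) : Measurable fun x : Fin m → ℝ => countLE x t := by
  have hrep : (fun x : Fin m → ℝ => countLE x t)
      = fun x => ∑ k : Fin m, if x k ≤ t then 1 else 0 := by
    funext x
    rw [countLE, Finset.card_filter]
  rw [hrep]
  exact Finset.measurable_sum _ (fun k _ => Measurable.ite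
    (measurableSet_le (measurable_pi_apply k) measurable_const)
    measurable_const measurable_const)

lemma measurableSet_le_suR (α : ℕ → ℝ) {j : ℕ} (hj : 1 ≤ j) :
    MeasurableSet {x : Fin m → ℝ | j ≤ suR α x} := by
  have hrep : {x : Fin m → ℝ | j ≤ suR α x}
      = ⋃ k ∈ Finset.Icc j m, {x | k ≤ countLE x (α k)} := by
    ext x
    simp only [Set.mem_setOf_eq, Set.mem_iUnion, Finset.mem_Icc, exists_prop]
    constructor
    · intro h
      have h0 : 1 ≤ suR α x := le_trans hj h
      exact ⟨suR α x, ⟨h, suR_le α x⟩, suR_spec α x h0⟩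
    · rintro ⟨k, ⟨hjk, hkm⟩, hk⟩
      exact le_trans hjk (le_suR α x (le_trans hj hjk) hkm hk)
  rw [hrep]
  exact MeasurableSet.biUnion (Finset.Icc j m).countable_toSet
    (fun k _ => measurable_countLE (α k) measurableSet_Ici)

lemma measurable_suR (α : ℕ → ℝ) : Measurable (suR (m := m) α) := by
  have hrep : suR (m := m) α
      = fun x => ∑ j ∈ Finset.Icc 1 m, if j ≤ suR α x then 1 else 0 := by
    funext x
    have h1 : Finset.filter (fun j => j ≤ suR α x) (Finset.Icc 1 m)
        = Finset.Icc 1 (suR α x) := by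
      have := suR_le α x
      ext j
      simp only [Finset.mem_filter, Finset.mem_Icc]
      omega
    rw [← Finset.card_filter, h1, Nat.card_Icc]
    omega
  rw [hrep]
  exact Finset.measurable_sum _ (fun j hj => Measurable.ite
    (measurableSet_le_suR α (Finset.mem_Icc.mp hj).1) measurable_const measurable_const)




/-- If `m1 ⟂ m2` and `(m1 ⊔ m2) ⟂ m3`, then `m1 ⟂ (m2 ⊔ m3)`. -/
lemma indep_sup_right {Ω : Type*} [mΩ : MeasurableSpace Ω] {μ : Measure Ω}
    [IsProbabilityMeasure μ] {m1 m2 m3 : MeasurableSpace Ω}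
    (h1 : m1 ≤ mΩ) (h2 : m2 ≤ mΩ) (h3 : m3 ≤ mΩ)
    (h12 : Indep m1 m2 μ) (h123 : Indep (m1 ⊔ m2) m3 μ) : Indep m1 (m2 ⊔ m3) μ := by
  set p2 : Set (Set Ω) :=
    {s | ∃ B C, MeasurableSet[m2] B ∧ MeasurableSet[m3] C ∧ s = B ∩ C} with hp2def
  have h23 : Indep m2 m3 μ := indep_of_indep_of_le_left h123 le_sup_right
  refine IndepSets.indep (p1 := {s | MeasurableSet[m1] s}) (p2 := p2)
    h1 (sup_le h2 h3) ?_ ?_ ?_ ?_ ?_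
  · exact @MeasurableSpace.isPiSystem_measurableSet Ω m1
  · rintro s ⟨B, C, hB, hC, rfl⟩ t ⟨B', C', hB', hC', rfl⟩ -
    exact ⟨B ∩ B', C ∩ C', hB.inter hB', hC.inter hC', by
      rw [Set.inter_inter_inter_comm]⟩
  · exact (@MeasurableSpace.generateFrom_measurableSet Ω m1).symm
  · refine le_antisymm (sup_le ?_ ?_) (MeasurableSpace.generateFrom_le ?_)
    · intro s hs
      exact MeasurableSpace.measurableSet_generateFrom
        ⟨s, Set.univ, hs, MeasurableSet.univ, by simp⟩
    · intro s hs
      exact MeasurableSpace.measurableSet_generateFrom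
        ⟨Set.univ, s, MeasurableSet.univ, hs, by simp⟩
    · rintro s ⟨B, C, hB, hC, rfl⟩
      exact MeasurableSet.inter (le_sup_left (α := MeasurableSpace Ω) _ hB)
        (le_sup_right (α := MeasurableSpace Ω) _ hC)
  · rw [IndepSets_iff]
    rintro A s hA ⟨B, C, hB, hC, rfl⟩
    have e1 : μ (A ∩ (B ∩ C)) = μ ((A ∩ B) ∩ C) := by rw [Set.inter_assoc]
    have e2 : μ ((A ∩ B) ∩ C) = μ (A ∩ B) * μ C :=
      (Indep_iff _ _ _).mp h123 _ _
        (MeasurableSet.inter (le_sup_left (α := MeasurableSpace Ω) _ hA)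
          (le_sup_right (α := MeasurableSpace Ω) _ hB)) hC
    have e3 : μ (A ∩ B) = μ A * μ B := (Indep_iff _ _ _).mp h12 _ _ hA hB
    have e4 : μ (B ∩ C) = μ B * μ C := (Indep_iff _ _ _).mp h23 _ _ hB hC
    rw [e1, e2, e3, e4, mul_assoc]



lemma indepFun_eval_update {Ω : Type*} [MeasurableSpace Ω] {μ : Measure Ω}
    [IsProbabilityMeasure μ] (I0 : Finset (Fin m)) (x : Ω → Fin m → ℝ)
    (hmeas : ∀ k, Measurable fun ω => x ω k)
    {i : Fin m} (hi : i ∈ I0)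
    (hBI2 : IndepFun (fun ω (k : {k // k ∈ I0}) => x ω k)
      (fun ω (k : {k // k ∉ I0}) => x ω k) μ)
    (hBI3 : iIndepFun (fun (k : {k // k ∈ I0}) ω => x ω k.1) μ) :
    IndepFun (fun ω => x ω i) (fun ω => Function.update (x ω) i 0) μ := by
  set i' : {k // k ∈ I0} := ⟨i, hi⟩ with hi'
  set T : Finset {k // k ∈ I0} := Finset.univ.erase i' with hT
  -- within-I0 independence of coordinate i vs the rest
  have hXY := hBI3.indepFun_finset {i'} T (Finset.disjoint_singleton_left.mpr
    (Finset.notMem_erase i' Finset.univ)) (fun k => hmeas k.1)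
  -- compose with evaluation on the left
  have hX : (fun ω => x ω i)
      = (fun u : ({i'} : Finset {k // k ∈ I0}) → ℝ =>
          u ⟨i', Finset.mem_singleton_self i'⟩) ∘ (fun ω (k : ({i'} : Finset _)) => x ω k.1.1) :=
    rfl
  have hXY' : IndepFun (fun ω => x ω i) (fun ω (k : T) => x ω k.1.1) μ := by
    rw [hX]
    exact hXY.comp (measurable_pi_apply _) measurable_id
  -- σ-algebras
  set Y : Ω → (T → ℝ) := fun ω (k : T) => x ω k.1.1 with hYdef
  set Z : Ω → ({k // k ∉ I0} → ℝ) := fun ω (k : {k // k ∉ I0}) => x ω k.1 with hZdef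
  have hIndXY : Indep (MeasurableSpace.comap (fun ω => x ω i) inferInstance)
      (MeasurableSpace.comap Y inferInstance) μ := hXY'
  have hg1 : Measurable (fun ω (k : {k // k ∈ I0}) => x ω k.1) :=
    measurable_pi_lambda _ (fun k => hmeas k.1)
  have hmX_le : MeasurableSpace.comap (fun ω => x ω i) inferInstance
      ≤ MeasurableSpace.comap (fun ω (k : {k // k ∈ I0}) => x ω k.1) inferInstance := by
    have he : (fun ω => x ω i) = (fun u : {k // k ∈ I0} → ℝ => u i')
        ∘ (fun ω (k : {k // k ∈ I0}) => x ω k.1) := rfl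
    rw [he, ← MeasurableSpace.comap_comp]
    exact MeasurableSpace.comap_mono (Measurable.comap_le (measurable_pi_apply i'))
  have hmY_le : MeasurableSpace.comap Y inferInstance
      ≤ MeasurableSpace.comap (fun ω (k : {k // k ∈ I0}) => x ω k.1) inferInstance := by
    have he : Y = (fun u : {k // k ∈ I0} → ℝ => fun (k : T) => u k.1)
        ∘ (fun ω (k : {k // k ∈ I0}) => x ω k.1) := rfl
    rw [he, ← MeasurableSpace.comap_comp]
    exact MeasurableSpace.comap_mono (Measurable.comap_le
      (measurable_pi_lambda _ (fun k => measurable_pi_apply k.1)))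
  have hIndXYZ : Indep (MeasurableSpace.comap (fun ω => x ω i) inferInstance
        ⊔ MeasurableSpace.comap Y inferInstance)
      (MeasurableSpace.comap Z inferInstance) μ :=
    indep_of_indep_of_le_left hBI2 (sup_le hmX_le hmY_le)
  have hind : Indep (MeasurableSpace.comap (fun ω => x ω i) inferInstance)
      (MeasurableSpace.comap Y inferInstance ⊔ MeasurableSpace.comap Z inferInstance) μ := by
    refine indep_sup_right ?_ ?_ ?_ hIndXY hIndXYZ
    · exact Measurable.comap_le (hmeas i)
    · exact Measurable.comap_le (measurable_pi_lambda _ (fun k => hmeas k.1.1))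
    · exact Measurable.comap_le (measurable_pi_lambda _ (fun k => hmeas k.1))
  -- the update map factors through (Y, Z)
  set H : (T → ℝ) × ({k // k ∉ I0} → ℝ) → (Fin m → ℝ) := fun uv k =>
    if h : k ∈ I0 then
      (if hk : (⟨k, h⟩ : {k // k ∈ I0}) ∈ T then uv.1 ⟨⟨k, h⟩, hk⟩ else 0)
    else uv.2 ⟨k, h⟩ with hH
  have hHmeas : Measurable H := by
    apply measurable_pi_lambda
    intro k
    by_cases h : k ∈ I0
    · by_cases hk : (⟨k, h⟩ : {k // k ∈ I0}) ∈ T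
      · simpa [hH, h, hk, Function.comp_def] using (measurable_pi_apply _).comp measurable_fst
      · simp only [hH, h, hk, dif_pos, dif_neg]
        exact measurable_const
    · simpa [hH, h, Function.comp_def] using (measurable_pi_apply _).comp measurable_snd
  have hWfact : (fun ω => Function.update (x ω) i 0) = H ∘ (fun ω => (Y ω, Z ω)) := by
    funext ω k
    simp only [Function.comp_apply, hH]
    by_cases h : k ∈ I0
    · by_cases hk : (⟨k, h⟩ : {k // k ∈ I0}) ∈ T
      · have hki : k ≠ i := by
          intro he
          subst he
          exact (Finset.mem_erase.mp hk).1 (by simp [hi'])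
        simp [h, hk, Function.update_of_ne hki, hYdef]
      · have hki : k = i := by
          by_contra hne
          exact hk (Finset.mem_erase.mpr ⟨by simp [hi', Subtype.ext_iff, hne], Finset.mem_univ _⟩)
        subst hki
        simp [h, hk]
    · have hki : k ≠ i := fun he => h (he ▸ hi)
      simp [h, Function.update_of_ne hki, hZdef]
  have hcomap_pair : MeasurableSpace.comap (fun ω => (Y ω, Z ω)) inferInstance
      = MeasurableSpace.comap Y inferInstance ⊔ MeasurableSpace.comap Z inferInstance := by
    rw [show (inferInstance : MeasurableSpace ((T → ℝ) × ({k // k ∉ I0} → ℝ)))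
        = MeasurableSpace.comap Prod.fst inferInstance
          ⊔ MeasurableSpace.comap Prod.snd inferInstance from rfl,
      MeasurableSpace.comap_sup, MeasurableSpace.comap_comp, MeasurableSpace.comap_comp]
    rfl
  have hW_le : MeasurableSpace.comap (fun ω => Function.update (x ω) i 0) inferInstance
      ≤ MeasurableSpace.comap Y inferInstance ⊔ MeasurableSpace.comap Z inferInstance := by
    rw [hWfact, ← MeasurableSpace.comap_comp, ← hcomap_pair]
    exact MeasurableSpace.comap_mono (measurable_iff_comap_le.mp hHmeas)
  exact indep_of_indep_of_le_right hind hW_le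


variable {m : ℕ}
lemma unif01_Iic {c : ℝ} (h0 : 0 ≤ c) (h1 : c ≤ 1) :
    unif01 (Set.Iic c) = ENNReal.ofReal c := by
  rw [unif01, Measure.restrict_apply measurableSet_Iic]
  have he : Set.Iic c ∩ Set.Icc 0 1 = Set.Icc 0 c := by
    ext t
    simp only [Set.mem_inter_iff, Set.mem_Iic, Set.mem_Icc]
    constructor
    · rintro ⟨ht, h0t, _⟩; exact ⟨h0t, ht⟩
    · rintro ⟨h0t, htc⟩; exact ⟨htc, h0t, le_trans htc h1⟩
  rw [he, Real.volume_Icc]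
  simp

lemma integral_indicator_le_eq {Ω : Type*} [MeasurableSpace Ω] (μ : Measure Ω)
    [IsProbabilityMeasure μ] {X : Ω → ℝ} (hX : Measurable X)
    (hmap : Measure.map X μ = unif01) {c : ℝ} (h0 : 0 ≤ c) (h1 : c ≤ 1) :
    ∫ ω, (if X ω ≤ c then (1:ℝ) else 0) ∂μ = c := by
  have hrep : (fun ω => if X ω ≤ c then (1:ℝ) else 0)
      = Set.indicator (X ⁻¹' Set.Iic c) (fun _ => (1:ℝ)) := by
    funext ω
    by_cases h : X ω ≤ c <;> simp [Set.indicator_apply, Set.mem_Iic, h]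
  rw [hrep, integral_indicator_const _ (hX measurableSet_Iic)]
  rw [measureReal_def, ← Measure.map_apply hX measurableSet_Iic, hmap, unif01_Iic h0 h1]
  simp [ENNReal.toReal_ofReal h0]

lemma integrable_bdd {Ω : Type*} [MeasurableSpace Ω] {μ : Measure Ω} [IsProbabilityMeasure μ]
    {f : Ω → ℝ} (hf : Measurable f) {C : ℝ} (h : ∀ ω, |f ω| ≤ C) : Integrable f μ :=
  (integrable_const C).mono' hf.aestronglyMeasurable
    (Filter.Eventually.of_forall (fun ω => by simpa using h ω))

lemma measurable_update_zero {Ω : Type*} [MeasurableSpace Ω] (x : Ω → Fin m → ℝ)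
    (hmeas : ∀ k, Measurable fun ω => x ω k) (i : Fin m) :
    Measurable fun ω => Function.update (x ω) i 0 := by
  have hrep : (fun ω => Function.update (x ω) i 0)
      = fun ω k => if k = i then 0 else x ω k := by
    funext ω k
    rw [Function.update_apply]
  rw [hrep]
  refine measurable_pi_lambda _ (fun k => ?_)
  by_cases h : k = i
  · simp only [h, if_pos rfl]
    exact measurable_const
  · simp only [if_neg h]
    exact hmeas k


def phiA {m : ℕ} (α : ℕ → ℝ) (r : ℕ) (_ : Fin m) : ℝ → ℝ := fun u => if u ≤ α r then 1 else 0

def psiA {m : ℕ} (α : ℕ → ℝ) (r : ℕ) : (Fin m → ℝ) → ℝ :=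
  fun w => if suR α w = r then ((r : ℝ))⁻¹ else 0

lemma measurable_phiA {α : ℕ → ℝ} {r : ℕ} {i : Fin m} : Measurable (phiA (m := m) α r i) :=
  Measurable.ite measurableSet_Iic measurable_const measurable_const

lemma measurable_psiA {α : ℕ → ℝ} {r : ℕ} : Measurable (psiA (m := m) α r) :=
  Measurable.ite (measurable_suR α (measurableSet_singleton r))
    measurable_const measurable_const

lemma abs_phiA_le {α : ℕ → ℝ} {r : ℕ} {i : Fin m} (u : ℝ) : |phiA (m := m) α r i u| ≤ 1 := by
  unfold phiA
  by_cases h : u ≤ α r <;> simp [h]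

lemma abs_psiA_le {α : ℕ → ℝ} {r : ℕ} (hr : 1 ≤ r) (w : Fin m → ℝ) :
    |psiA (m := m) α r w| ≤ 1 := by
  unfold psiA
  by_cases h : suR α w = r
  · rw [if_pos h, abs_of_nonneg (by positivity), inv_le_one_iff₀]
    right
    exact_mod_cast hr
  · rw [if_neg h]
    simp

lemma integral_term_eq {Ω : Type*} [MeasurableSpace Ω] {μ : Measure Ω} [IsProbabilityMeasure μ]
    (hm : 1 ≤ m) {α : ℕ → ℝ} (hα1 : 0 < α 1) (hmono : Monotone α) (hαm : α m < 1)
    (I0 : Finset (Fin m)) (x : Ω → Fin m → ℝ) (hmeas : ∀ k, Measurable fun ω => x ω k)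
    {i : Fin m} (hi : i ∈ I0)
    (hBI2 : IndepFun (fun ω (k : {k // k ∈ I0}) => x ω k)
      (fun ω (k : {k // k ∉ I0}) => x ω k) μ)
    (hBI3 : iIndepFun (fun (k : {k // k ∈ I0}) ω => x ω k.1) μ)
    (hunif : Measure.map (fun ω => x ω i) μ = unif01) :
    ∫ ω, (if x ω i ≤ α (suR α (Function.update (x ω) i 0)) then (1:ℝ) else 0)
        / (suR α (Function.update (x ω) i 0) : ℝ) ∂μ
    = ∫ ω, α (suR α (Function.update (x ω) i 0))
        / (suR α (Function.update (x ω) i 0) : ℝ) ∂μ := by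
  have hWmeas : Measurable fun ω => Function.update (x ω) i 0 :=
    measurable_update_zero x hmeas i
  have hR0mem : ∀ ω, suR α (Function.update (x ω) i 0) ∈ Finset.Icc 1 m := fun ω =>
    Finset.mem_Icc.mpr ⟨one_le_suR_update hm hα1 _ _, suR_le α _⟩
  have hInd : IndepFun (fun ω => x ω i) (fun ω => Function.update (x ω) i 0) μ :=
    indepFun_eval_update I0 x hmeas hi hBI2 hBI3
  have hαr_mem : ∀ r ∈ Finset.Icc 1 m, 0 ≤ α r ∧ α r ≤ 1 := by
    intro r hr
    obtain ⟨h1r, hrm⟩ := Finset.mem_Icc.mp hr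
    exact ⟨le_of_lt (lt_of_lt_of_le hα1 (hmono h1r)),
      le_of_lt (lt_of_le_of_lt (hmono hrm) hαm)⟩
  have hFrep : (fun ω => (if x ω i ≤ α (suR α (Function.update (x ω) i 0)) then (1:ℝ) else 0)
      / (suR α (Function.update (x ω) i 0) : ℝ))
      = fun ω => ∑ r ∈ Finset.Icc 1 m,
          phiA α r i (x ω i) * psiA α r (Function.update (x ω) i 0) := by
    funext ω
    rw [Finset.sum_eq_single (suR α (Function.update (x ω) i 0))]
    · unfold phiA psiA
      rw [if_pos rfl, div_eq_mul_inv]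
    · intro r _ hr
      unfold psiA
      rw [if_neg (fun h => hr h.symm : ¬ suR α (Function.update (x ω) i 0) = r), mul_zero]
    · intro h
      exact absurd (hR0mem ω) h
  have hGrep : (fun ω => α (suR α (Function.update (x ω) i 0))
      / (suR α (Function.update (x ω) i 0) : ℝ))
      = fun ω => ∑ r ∈ Finset.Icc 1 m, α r * psiA α r (Function.update (x ω) i 0) := by
    funext ω
    rw [Finset.sum_eq_single (suR α (Function.update (x ω) i 0))]
    · unfold psiA
      rw [if_pos rfl, div_eq_mul_inv]
    · intro r _ hr
      unfold psiA
      rw [if_neg (fun h => hr h.symm : ¬ suR α (Function.update (x ω) i 0) = r), mul_zero]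
    · intro h
      exact absurd (hR0mem ω) h
  have hint1 : ∀ r ∈ Finset.Icc 1 m,
      Integrable (fun ω => phiA α r i (x ω i) * psiA α r (Function.update (x ω) i 0)) μ := by
    intro r hr
    refine integrable_bdd (C := 1) ((measurable_phiA.comp (hmeas i)).mul
      (measurable_psiA.comp hWmeas)) (fun ω => ?_)
    rw [abs_mul]
    have h2 := mul_le_mul (abs_phiA_le (α := α) (r := r) (i := i) (x ω i))
      (abs_psiA_le (α := α) (Finset.mem_Icc.mp hr).1 (Function.update (x ω) i 0))
      (abs_nonneg _) zero_le_one
    simpa using h2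
  have hint2 : ∀ r ∈ Finset.Icc 1 m,
      Integrable (fun ω => α r * psiA α r (Function.update (x ω) i 0)) μ := by
    intro r hr
    refine integrable_bdd (C := 1) (measurable_const.mul (measurable_psiA.comp hWmeas)) (fun ω => ?_)
    rw [abs_mul, abs_of_nonneg (hαr_mem r hr).1]
    have h2 := mul_le_mul (hαr_mem r hr).2
      (abs_psiA_le (α := α) (Finset.mem_Icc.mp hr).1 (Function.update (x ω) i 0))
      (abs_nonneg _) zero_le_one
    · simpa using h2
  rw [hFrep, hGrep, integral_finset_sum _ hint1, integral_finset_sum _ hint2]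
  refine Finset.sum_congr rfl (fun r hr => ?_)
  have hIr : IndepFun (fun ω => phiA α r i (x ω i))
      (fun ω => psiA α r (Function.update (x ω) i 0)) μ :=
    hInd.comp measurable_phiA measurable_psiA
  have hmul : ∫ ω, phiA α r i (x ω i) * psiA α r (Function.update (x ω) i 0) ∂μ
      = (∫ ω, phiA α r i (x ω i) ∂μ) * ∫ ω, psiA α r (Function.update (x ω) i 0) ∂μ :=
    hIr.integral_fun_mul_eq_mul_integral ((measurable_phiA.comp (hmeas i)).aestronglyMeasurable)
      ((measurable_psiA.comp hWmeas).aestronglyMeasurable)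
  have hφint : ∫ ω, phiA α r i (x ω i) ∂μ = α r := by
    unfold phiA
    exact integral_indicator_le_eq μ (hmeas i) hunif (hαr_mem r hr).1 (hαr_mem r hr).2
  rw [hmul, hφint, ← integral_const_mul]


end SuAux

open SuAux

/-- If `i ↦ α_i/i` is non-increasing, the FDR of the step-up test
(under the BI model with uniform true p-values) is non-decreasing in each
false-null p-value `p_j`: enlarging the coordinate `j ∈ I1` pointwise can only
increase the FDR. -/
theorem su_fdr_monotone_in_false_pvalues
    {Ω : Type*} [MeasurableSpace Ω] (μ : Measure Ω) [IsProbabilityMeasure μ]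
    (m : ℕ) (hm : 1 ≤ m) (α : ℕ → ℝ)
    (hα0 : α 0 = 0) (hα1 : 0 < α 1) (hmono : Monotone α) (hαm : α m < 1)
    -- `i ↦ α_i/i` is non-increasing
    (hratio : ∀ i j : ℕ, 1 ≤ i → i ≤ j → j ≤ m → α j / j ≤ α i / i)
    (I0 : Finset (Fin m)) (p q : Ω → Fin m → ℝ) (j : Fin m) (hj : j ∉ I0)
    (hmeasp : ∀ i, Measurable (fun ω => p ω i))
    (hmeasq : ∀ i, Measurable (fun ω => q ω i))
    (hrangep : ∀ ω i, p ω i ∈ Set.Icc (0:ℝ) 1)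
    (hrangeq : ∀ ω i, q ω i ∈ Set.Icc (0:ℝ) 1)
    -- `q` agrees with `p` except in the false-null coordinate `j`, where it is larger
    (hagree : ∀ ω, ∀ i, i ≠ j → q ω i = p ω i)
    (hle : ∀ ω, p ω j ≤ q ω j)
    -- BI with uniform true p-values, for both `p` and `q`
    (hBI2p : IndepFun (fun ω (i : {i // i ∈ I0}) => p ω i)
      (fun ω (i : {i // i ∉ I0}) => p ω i) μ)
    (hBI2q : IndepFun (fun ω (i : {i // i ∈ I0}) => q ω i)
      (fun ω (i : {i // i ∉ I0}) => q ω i) μ)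
    (hBI3 : iIndepFun (fun (i : {i // i ∈ I0}) ω => p ω i.1) μ)
    (hunif : ∀ i ∈ I0, Measure.map (fun ω => p ω i) μ = unif01) :
    suFDR μ α p I0 ≤ suFDR μ α q I0 := by
  have hij : ∀ i ∈ I0, i ≠ j := fun i hi he => hj (he ▸ hi)
  have hqp : ∀ i ∈ I0, (fun ω => q ω i) = (fun ω => p ω i) := fun i hi =>
    funext fun ω => hagree ω i (hij i hi)
  have hBI3q : iIndepFun (fun (i : {i // i ∈ I0}) ω => q ω i.1) μ := by
    have he : (fun (k : {i // i ∈ I0}) (ω : Ω) => q ω k.1) = (fun k ω => p ω k.1) :=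
      funext fun k => funext fun ω => hagree ω k.1 (hij k.1 k.2)
    rw [he]
    exact hBI3
  have hunifq : ∀ i ∈ I0, Measure.map (fun ω => q ω i) μ = unif01 := fun i hi => by
    rw [hqp i hi]
    exact hunif i hi
  -- measurability helpers
  have hmeas_term : ∀ (x : Ω → Fin m → ℝ), (∀ k, Measurable fun ω => x ω k) → ∀ i : Fin m,
      Measurable fun ω => suR α (Function.update (x ω) i 0) := fun x hx i =>
    (measurable_suR α).comp (measurable_update_zero x hx i)
  have habs_div : ∀ (a d : ℝ), 0 ≤ a → a ≤ 1 → 1 ≤ d → |a / d| ≤ 1 := by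
    intro a d ha ha1 hd
    have hd0 : 0 < d := lt_of_lt_of_le zero_lt_one hd
    rw [abs_div, abs_of_nonneg ha, abs_of_pos hd0, div_le_one hd0]
    linarith
  have hFint : ∀ (x : Ω → Fin m → ℝ), (∀ k, Measurable fun ω => x ω k) → ∀ i : Fin m,
      Integrable (fun ω => (if x ω i ≤ α (suR α (Function.update (x ω) i 0)) then (1:ℝ) else 0)
        / (suR α (Function.update (x ω) i 0) : ℝ)) μ := by
    intro x hx i
    refine integrable_bdd (C := 1) (Measurable.div
      (Measurable.ite (measurableSet_le (hx i)
        ((measurable_of_countable α).comp (hmeas_term x hx i)))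
        measurable_const measurable_const)
      ((measurable_of_countable _).comp (hmeas_term x hx i))) (fun ω => ?_)
    have h1 : (1:ℝ) ≤ (suR α (Function.update (x ω) i 0) : ℝ) := by
      exact_mod_cast one_le_suR_update hm hα1 (x ω) i
    by_cases h : x ω i ≤ α (suR α (Function.update (x ω) i 0))
    · rw [if_pos h]
      exact habs_div _ _ zero_le_one le_rfl h1
    · rw [if_neg h]
      exact habs_div _ _ le_rfl zero_le_one h1
  have hGint : ∀ (x : Ω → Fin m → ℝ), (∀ k, Measurable fun ω => x ω k) → ∀ i : Fin m,
      Integrable (fun ω => α (suR α (Function.update (x ω) i 0))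
        / (suR α (Function.update (x ω) i 0) : ℝ)) μ := by
    intro x hx i
    refine integrable_bdd (C := 1) (Measurable.div
      ((measurable_of_countable α).comp (hmeas_term x hx i))
      ((measurable_of_countable _).comp (hmeas_term x hx i))) (fun ω => ?_)
    have h1 : 1 ≤ suR α (Function.update (x ω) i 0) := one_le_suR_update hm hα1 (x ω) i
    have h1' : (1:ℝ) ≤ (suR α (Function.update (x ω) i 0) : ℝ) := by exact_mod_cast h1
    have hm' : suR α (Function.update (x ω) i 0) ≤ m := suR_le α _
    exact habs_div _ _ (le_of_lt (lt_of_lt_of_le hα1 (hmono h1)))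
      (le_of_lt (lt_of_le_of_lt (hmono hm') hαm)) h1'
  -- expansion of the step-up FDR
  have hexp : ∀ (x : Ω → Fin m → ℝ), (∀ k, Measurable fun ω => x ω k) →
      (∀ ω k, x ω k ∈ Set.Icc (0:ℝ) 1) →
      suFDR μ α x I0 = ∑ i ∈ I0, ∫ ω,
        (if x ω i ≤ α (suR α (Function.update (x ω) i 0)) then (1:ℝ) else 0)
          / (suR α (Function.update (x ω) i 0) : ℝ) ∂μ := by
    intro x hxm hxr
    have hptw : (fun ω => ((I0.filter (fun i => x ω i ≤ α (suR α (x ω)))).card : ℝ)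
        / ((max (suR α (x ω)) 1 : ℕ) : ℝ))
        = fun ω => ∑ i ∈ I0,
          (if x ω i ≤ α (suR α (Function.update (x ω) i 0)) then (1:ℝ) else 0)
            / (suR α (Function.update (x ω) i 0) : ℝ) := by
      funext ω
      rw [Finset.card_filter]
      push_cast
      rw [Finset.sum_div]
      refine Finset.sum_congr rfl (fun i _ => ?_)
      have h0i : 0 ≤ x ω i := (hxr ω i).1
      by_cases h : x ω i ≤ α (suR α (x ω))
      · have h2 : x ω i ≤ α (suR α (Function.update (x ω) i 0)) :=
          (update_indicator_iff hmono h0i).mp h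
        have h3 : suR α (x ω) = suR α (Function.update (x ω) i 0) := suR_update_eq h0i h2
        have h4 : 1 ≤ suR α (x ω) := by
          rw [h3]
          exact one_le_suR_update hm hα1 (x ω) i
        rw [if_pos h, if_pos h2]
        have h5 : ((suR α (x ω) : ℝ)) ⊔ 1 = (suR α (x ω) : ℝ) :=
          sup_eq_left.mpr (by exact_mod_cast h4)
        rw [h5, h3]
      · have h2 : ¬ x ω i ≤ α (suR α (Function.update (x ω) i 0)) := fun hc =>
          h ((update_indicator_iff hmono h0i).mpr hc)
        rw [if_neg h, if_neg h2, zero_div, zero_div]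
    show (∫ ω, ((I0.filter (fun i => x ω i ≤ α (suR α (x ω)))).card : ℝ)
        / ((max (suR α (x ω)) 1 : ℕ) : ℝ) ∂μ) = _
    rw [hptw]
    exact integral_finset_sum I0 (fun i _ => hFint x hxm i)
  -- pointwise comparison of the conditional expectations
  have hcomp : ∀ i ∈ I0,
      (∫ ω, α (suR α (Function.update (p ω) i 0))
        / (suR α (Function.update (p ω) i 0) : ℝ) ∂μ)
      ≤ ∫ ω, α (suR α (Function.update (q ω) i 0))
        / (suR α (Function.update (q ω) i 0) : ℝ) ∂μ := by
    intro i hi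
    refine integral_mono (hGint p hmeasp i) (hGint q hmeasq i) (fun ω => ?_)
    have hupd : ∀ k, Function.update (p ω) i 0 k ≤ Function.update (q ω) i 0 k := by
      intro k
      rcases eq_or_ne k i with rfl | hk
      · simp
      · rw [Function.update_of_ne hk, Function.update_of_ne hk]
        rcases eq_or_ne k j with rfl | hkj
        · exact hle ω
        · rw [hagree ω k hkj]
    have ha : suR α (Function.update (q ω) i 0) ≤ suR α (Function.update (p ω) i 0) :=
      suR_anti α hupd
    have h1a : 1 ≤ suR α (Function.update (q ω) i 0) := one_le_suR_update hm hα1 _ _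
    have hbm : suR α (Function.update (p ω) i 0) ≤ m := suR_le α _
    exact hratio _ _ h1a ha hbm
  calc suFDR μ α p I0
      = ∑ i ∈ I0, ∫ ω, (if p ω i ≤ α (suR α (Function.update (p ω) i 0)) then (1:ℝ) else 0)
          / (suR α (Function.update (p ω) i 0) : ℝ) ∂μ := hexp p hmeasp hrangep
    _ = ∑ i ∈ I0, ∫ ω, α (suR α (Function.update (p ω) i 0))
          / (suR α (Function.update (p ω) i 0) : ℝ) ∂μ := by
        refine Finset.sum_congr rfl (fun i hi => ?_)
        exact integral_term_eq hm hα1 hmono hαm I0 p hmeasp hi hBI2p hBI3 (hunif i hi)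
    _ ≤ ∑ i ∈ I0, ∫ ω, α (suR α (Function.update (q ω) i 0))
          / (suR α (Function.update (q ω) i 0) : ℝ) ∂μ :=
        Finset.sum_le_sum hcomp
    _ = ∑ i ∈ I0, ∫ ω, (if q ω i ≤ α (suR α (Function.update (q ω) i 0)) then (1:ℝ) else 0)
          / (suR α (Function.update (q ω) i 0) : ℝ) ∂μ := by
        refine Finset.sum_congr rfl (fun i hi => ?_)
        exact (integral_term_eq hm hα1 hmono hαm I0 q hmeasq hi hBI2q hBI3q (hunifq i hi)).symm
    _ = suFDR μ α q I0 := (hexp q hmeasq hrangeq).symm
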